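/- Let (A, cl) be a matroid such that α(X) ≥ 0 for every union of flats X. Then there exists an α-transversal of the set of flats of A: a family (X_F : F a flat) of pairwise disjoint subsets with X_F ⊆ F and |X_F| = α(F). -/

import Mathlib

open Finset

/-- Predimension of `X`: `|X| - |{r ∈ R : r ⊆ X}|`. -/
def delta {α : Type*} [DecidableEq α] (R : Finset (Finset α)) (X : Finset α) : ℤ :=
  (X.card : ℤ) - ((R.filter (fun r => r ⊆ X)).card : ℤ)

/-- `F` is a flat (closed set) of the matroid on `A` with rank function `d`. -/
def IsFlat {α : Type*} [DecidableEq α] (A : Finset α) (d : Finset α → ℤ) (F : Finset α) :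
    Prop :=
  F ⊆ A ∧ ∀ y ∈ A, d (insert y F) = d F → y ∈ F

open scoped Classical in
/-- Mason's α-function: `α(X) = |X| - d(X) - Σ_{G a flat, G ⊊ X} α(G)`. -/
noncomputable def alphaFn {α : Type*} (Flat : Finset α → Prop) (d : Finset α → ℤ)
    (X : Finset α) : ℤ :=
  (X.card : ℤ) - d X -
    ∑ G ∈ (X.powerset.filter (fun G => Flat G ∧ G ≠ X)).attach, alphaFn Flat d G.1
termination_by X.card
decreasing_by
  have h := G.2
  simp only [Finset.mem_filter, Finset.mem_powerset] at h
  exact Finset.card_lt_card (lt_of_le_of_ne h.1 h.2.2)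

/-- `X` is a union of flats. -/
def UnionOfFlats {α : Type*} (Flat : Finset α → Prop) (X : Finset α) : Prop :=
  ∀ x ∈ X, ∃ F, Flat F ∧ F ⊆ X ∧ x ∈ F

open scoped Classical in
lemma alphaFn_eq {α : Type*} (Flat : Finset α → Prop) (d : Finset α → ℤ) (X : Finset α) :
    alphaFn Flat d X = (X.card : ℤ) - d X -
      ∑ G ∈ (X.powerset.filter (fun G => Flat G ∧ G ≠ X)), alphaFn Flat d G := by
  rw [alphaFn, Finset.sum_attach]

lemma flat_alpha_nonneg {α : Type*} [DecidableEq α] (A : Finset α) (d : Finset α → ℤ)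
    (halpha : ∀ X ⊆ A, UnionOfFlats (IsFlat A d) X → 0 ≤ alphaFn (IsFlat A d) d X)
    {F : Finset α} (hF : IsFlat A d F) : 0 ≤ alphaFn (IsFlat A d) d F :=
  halpha F hF.1 (fun x hx => ⟨F, hF, Finset.Subset.refl F, hx⟩)

open scoped Classical in
lemma hall_key {α : Type*} [DecidableEq α] (A : Finset α) (d : Finset α → ℤ)
    (hrank : ∀ X ⊆ A, 0 ≤ d X ∧ d X ≤ X.card)
    (halpha : ∀ X ⊆ A, UnionOfFlats (IsFlat A d) X → 0 ≤ alphaFn (IsFlat A d) d X)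
    (S : Finset (Finset α)) (hS : ∀ F ∈ S, IsFlat A d F) :
    ∑ F ∈ S, alphaFn (IsFlat A d) d F ≤ ((S.biUnion id).card : ℤ) := by
  set X := S.biUnion id with hX
  have hsubX : ∀ F ∈ S, F ⊆ X := fun F hF => Finset.subset_biUnion_of_mem id hF
  have hXA : X ⊆ A := by
    intro x hx
    rcases Finset.mem_biUnion.1 hx with ⟨F, hF, hxF⟩
    exact (hS F hF).1 hxF
  have hUF : UnionOfFlats (IsFlat A d) X := by
    intro x hx
    rcases Finset.mem_biUnion.1 hx with ⟨F, hF, hxF⟩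
    exact ⟨F, hS F hF, hsubX F hF, hxF⟩
  have hXnn : 0 ≤ alphaFn (IsFlat A d) d X := halpha X hXA hUF
  have hdnn : 0 ≤ d X := (hrank X hXA).1
  obtain ⟨P, hPmem, hPsum⟩ :
      ∃ P : Finset (Finset α), (∀ G, G ∈ P ↔ G ⊆ X ∧ IsFlat A d G ∧ G ≠ X) ∧
        ∑ G ∈ P, alphaFn (IsFlat A d) d G
          = (X.card : ℤ) - d X - alphaFn (IsFlat A d) d X := by
    have h0 : alphaFn (IsFlat A d) d X = (X.card : ℤ) - d X -
        ∑ G ∈ X.powerset.filter (fun G => IsFlat A d G ∧ G ≠ X), alphaFn (IsFlat A d) d G := by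
      rw [alphaFn_eq]
      congr 1
      refine Finset.sum_congr ?_ (fun _ _ => rfl)
      ext G; simp [Finset.mem_filter]
    exact ⟨X.powerset.filter (fun G => IsFlat A d G ∧ G ≠ X),
      fun G => by simp [Finset.mem_filter, Finset.mem_powerset], by omega⟩
  have hPnn : ∀ G ∈ P, 0 ≤ alphaFn (IsFlat A d) d G := by
    intro G hG
    exact flat_alpha_nonneg A d halpha ((hPmem G).1 hG).2.1
  by_cases hXS : X ∈ S
  · have herase : S.erase X ⊆ P := by
      intro G hG
      have hGS := Finset.mem_of_mem_erase hG
      exact (hPmem G).2 ⟨hsubX G hGS, hS G hGS, Finset.ne_of_mem_erase hG⟩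
    have h1 : ∑ G ∈ S.erase X, alphaFn (IsFlat A d) d G ≤ ∑ G ∈ P, alphaFn (IsFlat A d) d G :=
      Finset.sum_le_sum_of_subset_of_nonneg herase (fun G hG _ => hPnn G hG)
    have h2 : ∑ F ∈ S, alphaFn (IsFlat A d) d F
        = alphaFn (IsFlat A d) d X + ∑ G ∈ S.erase X, alphaFn (IsFlat A d) d G :=
      (Finset.add_sum_erase S _ hXS).symm
    omega
  · have hsub' : S ⊆ P := by
      intro G hG
      exact (hPmem G).2 ⟨hsubX G hG, hS G hG, fun h => hXS (h ▸ hG)⟩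
    have h1 : ∑ G ∈ S, alphaFn (IsFlat A d) d G ≤ ∑ G ∈ P, alphaFn (IsFlat A d) d G :=
      Finset.sum_le_sum_of_subset_of_nonneg hsub' (fun G hG _ => hPnn G hG)
    omega

/-- If `α ≥ 0` on all unions of flats, then there is an α-transversal of the flats:
pairwise disjoint sets `Xf F ⊆ F` with `|Xf F| = α(F)`. -/
theorem exists_alpha_transversal {α : Type*} [DecidableEq α]
    (A : Finset α) (d : Finset α → ℤ)
    (hrank : ∀ X ⊆ A, 0 ≤ d X ∧ d X ≤ X.card)
    (hmono : ∀ X Y : Finset α, X ⊆ Y → Y ⊆ A → d X ≤ d Y)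
    (hsub : ∀ X Y : Finset α, X ⊆ A → Y ⊆ A → d (X ∪ Y) + d (X ∩ Y) ≤ d X + d Y)
    (halpha : ∀ X ⊆ A, UnionOfFlats (IsFlat A d) X → 0 ≤ alphaFn (IsFlat A d) d X) :
    ∃ Xf : Finset α → Finset α,
      (∀ F, IsFlat A d F → Xf F ⊆ F ∧ ((Xf F).card : ℤ) = alphaFn (IsFlat A d) d F) ∧
      (∀ F G, IsFlat A d F → IsFlat A d G → F ≠ G → Disjoint (Xf F) (Xf G)) := by
  classical
  set n : Finset α → ℕ := fun F => (alphaFn (IsFlat A d) d F).toNat with hn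
  set ι := Σ F : {F : Finset α // IsFlat A d F}, Fin (n F.1) with hι
  set t : ι → Finset α := fun i => i.1.1 with ht
  -- Hall's condition
  have hall : ∀ s : Finset ι, s.card ≤ (s.biUnion t).card := by
    intro s
    set T : Finset (Finset α) := s.image (fun i => i.1.1) with hT
    have hTflat : ∀ F ∈ T, IsFlat A d F := by
      intro F hF
      rcases Finset.mem_image.1 hF with ⟨i, _, rfl⟩
      exact i.1.2
    have hbi : s.biUnion t = T.biUnion id := by
      ext x
      simp only [Finset.mem_biUnion, hT, Finset.mem_image, id]
      constructor
      · rintro ⟨i, hi, hx⟩; exact ⟨i.1.1, ⟨i, hi, rfl⟩, hx⟩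
      · rintro ⟨F, ⟨i, hi, rfl⟩, hx⟩; exact ⟨i, hi, hx⟩
    -- count: s.card ≤ Σ_{F ∈ T} n F
    have hcount : s.card ≤ ∑ F ∈ T, n F := by
      rw [Finset.card_eq_sum_card_image (fun i : ι => i.1.1) s]
      refine Finset.sum_le_sum ?_
      intro F hF
      have hflat : IsFlat A d F := hTflat F hF
      have : (s.filter (fun i : ι => i.1.1 = F)).card ≤ (Finset.range (n F)).card := by
        refine Finset.card_le_card_of_injOn (fun i => (i.2 : ℕ)) ?_ ?_
        · intro i hi
          simp only [Finset.mem_coe, Finset.mem_filter] at hi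
          simp only [Finset.mem_coe, Finset.mem_range]
          have : i.1 = ⟨F, hflat⟩ := Subtype.ext hi.2
          calc (i.2 : ℕ) < n i.1.1 := i.2.2
            _ = n F := by rw [this]
        · intro i hi j hj hij
          simp only [Finset.mem_coe, Finset.mem_filter] at hi hj
          have h1 : i.1 = j.1 := Subtype.ext (hi.2.trans hj.2.symm)
          rcases i with ⟨a, b⟩; rcases j with ⟨c, e⟩
          cases h1
          exact congrArg (Sigma.mk a) (Fin.ext hij)
      rwa [Finset.card_range] at this
    have hzsum : (∑ F ∈ T, n F : ℤ) = ∑ F ∈ T, alphaFn (IsFlat A d) d F := by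
      push_cast
      refine Finset.sum_congr rfl ?_
      intro F hF
      exact Int.toNat_of_nonneg (flat_alpha_nonneg A d halpha (hTflat F hF))
    have hkey := hall_key A d hrank halpha T hTflat
    have : (s.card : ℤ) ≤ ((T.biUnion id).card : ℤ) := by
      calc (s.card : ℤ) ≤ (∑ F ∈ T, n F : ℤ) := by exact_mod_cast hcount
        _ = ∑ F ∈ T, alphaFn (IsFlat A d) d F := hzsum
        _ ≤ ((T.biUnion id).card : ℤ) := hkey
    rw [hbi]
    exact_mod_cast this
  obtain ⟨f, hfinj, hft⟩ := (Finset.all_card_le_biUnion_card_iff_exists_injective t).1 hall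
  refine ⟨fun F => if h : IsFlat A d F then
      (Finset.univ : Finset (Fin (n F))).image (fun j => f ⟨⟨F, h⟩, j⟩) else ∅, ?_, ?_⟩
  · intro F hF
    dsimp only
    rw [dif_pos hF]
    constructor
    · intro x hx
      rcases Finset.mem_image.1 hx with ⟨j, _, rfl⟩
      exact hft ⟨⟨F, hF⟩, j⟩
    · have hcard : ((Finset.univ : Finset (Fin (n F))).image (fun j => f ⟨⟨F, hF⟩, j⟩)).card
          = n F := by
        rw [Finset.card_image_of_injective _ (fun j k hjk => sigma_mk_injective (hfinj hjk)),
          Finset.card_univ, Fintype.card_fin]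
      rw [hcard, hn]
      exact Int.toNat_of_nonneg (flat_alpha_nonneg A d halpha hF)
  · intro F G hF hG hFG
    dsimp only
    rw [dif_pos hF, dif_pos hG, Finset.disjoint_left]
    intro x hx hx'
    rcases Finset.mem_image.1 hx with ⟨j, _, rfl⟩
    rcases Finset.mem_image.1 hx' with ⟨k, _, hk⟩
    have := hfinj hk.symm
    exact hFG (congrArg (fun i : ι => i.1.1) this)
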